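/- Let n ≥ 4. For every pair of integers (a, b) with a + b > 2n and 1 ≤ b − a ≤ 2n − 3, the set R_{a,b} is nonempty and Y_{a,b} ≠ 0 in the group algebra; moreover, the family of elements {Y_{a,b}}, indexed by all pairs (a, b) of positive integers with a + b > 2n and 1 ≤ b − a ≤ 2n − 3, is linearly independent over ℤ. -/

import Mathlib

open Finset

/-- The group `W_D` of even-signed permutations on `n` letters: pairs
`g = (σ, ε)` with `σ ∈ S_n` and `ε : Fin n → {±1}` satisfying
`ε_1⋯ε_n = 1` (the Weyl group of type `D_n`). -/
abbrev WD (n : ℕ) := {g : Equiv.Perm (Fin n) × (Fin n → ℤˣ) // (∏ i, g.2 i) = 1}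

/-- The action of `g = (σ, ε) ∈ W_D` on tuples: `(g·μ)_i = ε_i · μ_{σ⁻¹(i)}`. -/
def WDact (n : ℕ) (g : WD n) (μ : Fin n → ℤ) : Fin n → ℤ :=
  fun i => ((g.1.2 i : ℤ)) * μ (g.1.1⁻¹ i)

/-- The alternating sum `Ã_D(μ) = Σ_{g ∈ W_D} sgn(g)·X^{g·μ}` in the group
algebra `AddMonoidAlgebra ℤ (Fin n → ℤ)`, with `sgn(σ, ε) = sign σ`. -/
noncomputable def AtildeD (n : ℕ) (μ : Fin n → ℤ) : AddMonoidAlgebra ℤ (Fin n → ℤ) :=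
  ∑ g : WD n, (Equiv.Perm.sign g.1.1 : ℤ) • AddMonoidAlgebra.single (WDact n g μ) 1

/-- The staircase tuple `ρ̃ = (n−1, n−2, …, 1, 0)`. -/
def rhoT (n : ℕ) : Fin n → ℤ := fun i => (n : ℤ) - 1 - (i : ℤ)

/-- `Y_{a,b} = Σ_{α ∈ R_{a,b}} Ã_D(ρ̃ − a·α)`, where `R_{a,b}` consists of the
negative roots `−(e_i + e_j)` with `i < j` (1-indexed), `(i + j) − 2n = a − b`,
`j ≤ a`, together with the negative roots `−(e_i − e_j)` with `i < j`,
`j − i = b − a`, `j ≥ 2n − a` (indices `0`-indexed in the formalization). -/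
noncomputable def YD (n : ℕ) (a b : ℕ) : AddMonoidAlgebra ℤ (Fin n → ℤ) :=
  ∑ ij : Fin n × Fin n,
    ((if ij.1 < ij.2 ∧
        ((ij.1 : ℤ) + 1) + ((ij.2 : ℤ) + 1) - 2 * n = (a : ℤ) - (b : ℤ) ∧
        (ij.2 : ℤ) + 1 ≤ (a : ℤ) then
        AtildeD n (rhoT n + (a : ℤ) • (Pi.single ij.1 (1 : ℤ) + Pi.single ij.2 (1 : ℤ)))
      else 0) +
    (if ij.1 < ij.2 ∧
        (ij.2 : ℤ) - (ij.1 : ℤ) = (b : ℤ) - (a : ℤ) ∧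
        2 * (n : ℤ) - (a : ℤ) ≤ (ij.2 : ℤ) + 1 then
        AtildeD n (rhoT n + (a : ℤ) • (Pi.single ij.1 (1 : ℤ) - Pi.single ij.2 (1 : ℤ)))
      else 0))


-- basic lemmas
section Basics
variable {n : ℕ}

def muP (n a : ℕ) (i j : Fin n) : Fin n → ℤ :=
  rhoT n + (a : ℤ) • (Pi.single i (1 : ℤ) + Pi.single j (1 : ℤ))

def muM (n a : ℕ) (i j : Fin n) : Fin n → ℤ :=
  rhoT n + (a : ℤ) • (Pi.single i (1 : ℤ) - Pi.single j (1 : ℤ))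

lemma muP_apply (a : ℕ) {i j : Fin n} (hij : i ≠ j) (k : Fin n) :
    muP n a i j k = (n : ℤ) - 1 - (k : ℤ) + (if k = i then (a : ℤ) else 0)
      + (if k = j then (a : ℤ) else 0) := by
  simp only [muP, Pi.add_apply, Pi.smul_apply, Pi.single_apply, rhoT, smul_eq_mul]
  split_ifs <;> simp_all [rhoT] <;> ring

lemma muM_apply (a : ℕ) {i j : Fin n} (hij : i ≠ j) (k : Fin n) :
    muM n a i j k = (n : ℤ) - 1 - (k : ℤ) + (if k = i then (a : ℤ) else 0)
      - (if k = j then (a : ℤ) else 0) := by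
  simp only [muM, Pi.add_apply, Pi.sub_apply, Pi.smul_apply, Pi.single_apply, smul_eq_mul]
  split_ifs <;> simp_all [rhoT] <;> ring

lemma orbit_abs {g : WD n} {μ ν : Fin n → ℤ} (h : WDact n g μ = ν) (c : ℤ) :
    (∃ k, |ν k| = c) ↔ (∃ k, |μ k| = c) := by
  have habs : ∀ k, |ν k| = |μ (g.1.1⁻¹ k)| := by
    intro k
    rw [← h]
    simp only [WDact, abs_mul]
    rcases Int.units_eq_one_or (g.1.2 k) with h1 | h1 <;> simp [h1]
  constructor
  · rintro ⟨k, hk⟩; exact ⟨g.1.1⁻¹ k, by rw [← habs k]; exact hk⟩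
  · rintro ⟨k, hk⟩; exact ⟨g.1.1 k, by rw [habs (g.1.1 k)]; simpa using hk⟩

lemma orbit_prod {g : WD n} {μ ν : Fin n → ℤ} (h : WDact n g μ = ν) :
    ∏ k, ν k = ∏ k, μ k := by
  rw [← h]
  simp only [WDact]
  rw [Finset.prod_mul_distrib]
  have h1 : (∏ k, ((g.1.2 k : ℤ))) = 1 := by
    have := congrArg (Units.coeHom ℤ) g.2
    rw [map_prod] at this
    simpa using this
  rw [h1, one_mul]
  exact Fintype.prod_equiv g.1.1⁻¹ _ _ (fun k => rfl)

lemma atilde_apply (μ ν : Fin n → ℤ) :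
    (AtildeD n μ).coeff ν = ∑ g : WD n,
      (Equiv.Perm.sign g.1.1 : ℤ) * (if WDact n g μ = ν then 1 else 0) := by
  rw [AtildeD, AddMonoidAlgebra.coeff_sum, Finsupp.finset_sum_apply]
  refine Finset.sum_congr rfl fun g _ => ?_
  rw [AddMonoidAlgebra.coeff_smul, Finsupp.smul_apply, AddMonoidAlgebra.coeff_single, Finsupp.single_apply, smul_eq_mul]

lemma atilde_apply_eq_zero {μ ν : Fin n → ℤ} (h : ∀ g : WD n, WDact n g μ ≠ ν) :
    (AtildeD n μ).coeff ν = 0 := by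
  rw [atilde_apply]
  refine Finset.sum_eq_zero fun g _ => ?_
  rw [if_neg (h g), mul_zero]

lemma stab_trivial {μ : Fin n → ℤ} (hinj : Function.Injective fun k => |μ k|)
    (g : WD n) (h : WDact n g μ = μ) : g = ⟨(1, 1), by simp⟩ := by
  have hσ : ∀ k, g.1.1⁻¹ k = k := by
    intro k
    have h1 : |μ (g.1.1⁻¹ k)| = |μ k| := by
      conv_rhs => rw [← h]
      simp only [WDact, abs_mul]
      rcases Int.units_eq_one_or (g.1.2 k) with h1 | h1 <;> simp [h1]
    exact hinj h1
  have hσ1 : g.1.1 = 1 := by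
    ext k
    have h2 := hσ (g.1.1 k)
    rw [← Equiv.Perm.mul_apply, inv_mul_cancel, Equiv.Perm.one_apply] at h2
    simp [← h2]
  have hε : ∀ k, μ k ≠ 0 → g.1.2 k = 1 := by
    intro k hk
    have h1 : (g.1.2 k : ℤ) * μ k = μ k := by
      have := congrFun h k
      simpa [WDact, hσ k] using this
    rcases Int.units_eq_one_or (g.1.2 k) with h2 | h2
    · exact h2
    · exfalso; rw [h2] at h1; simp at h1; omega
  have hεall : ∀ k, g.1.2 k = 1 := by
    intro k
    by_cases hk : μ k = 0
    · have hothers : ∀ m, m ≠ k → g.1.2 m = 1 := by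
        intro m hm
        refine hε m fun h0 => hm (hinj ?_)
        simp [h0, hk]
      have := g.2
      rwa [Fintype.prod_eq_single k hothers] at this
    · exact hε k hk
  ext : 1
  exact Prod.ext hσ1 (funext hεall)

lemma atilde_self {μ : Fin n → ℤ} (hinj : Function.Injective fun k => |μ k|) :
    (AtildeD n μ).coeff μ = 1 := by
  rw [atilde_apply]
  have he : WDact n (⟨(1, 1), by simp⟩ : WD n) μ = μ := by
    funext k; simp [WDact]
  rw [Finset.sum_eq_single (⟨(1, 1), by simp⟩ : WD n)]
  · rw [if_pos he]; simp
  · intro g _ hg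
    rw [if_neg, mul_zero]
    intro h
    exact hg (stab_trivial hinj g h)
  · intro h; exact absurd (Finset.mem_univ _) h

end Basics

section Char
variable {n : ℕ}

lemma absval_muP {a : ℕ} {i j : Fin n} (hij : i < j) (hja : (j : ℤ) + 1 ≤ a) (c : ℤ) :
    (∃ k, |muP n a i j k| = c) ↔
      c = (n : ℤ) - 1 - (i : ℤ) + a ∨ c = (n : ℤ) - 1 - (j : ℤ) + a ∨
        (0 ≤ c ∧ c ≤ (n : ℤ) - 1 ∧ c ≠ (n : ℤ) - 1 - (i : ℤ) ∧ c ≠ (n : ℤ) - 1 - (j : ℤ)) := by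
  have hij' : i ≠ j := hij.ne
  have hi : (i : ℕ) < (j : ℕ) := hij
  have hjn := j.isLt
  have hin := i.isLt
  constructor
  · rintro ⟨k, hk⟩
    have hkn := k.isLt
    rw [muP_apply a hij' k] at hk
    by_cases h1 : k = i
    · subst h1
      rw [if_pos rfl, if_neg hij', abs_of_nonneg (by omega)] at hk
      left; omega
    · by_cases h2 : k = j
      · subst h2
        rw [if_neg (fun h => h1 h), if_pos rfl, abs_of_nonneg (by omega)] at hk
        right; left; omega
      · rw [if_neg h1, if_neg h2, abs_of_nonneg (by omega)] at hk
        have hk1 : (k : ℕ) ≠ (i : ℕ) := fun h => h1 (Fin.ext h)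
        have hk2 : (k : ℕ) ≠ (j : ℕ) := fun h => h2 (Fin.ext h)
        right; right; omega
  · rintro (rfl | rfl | ⟨hc0, hc1, hci, hcj⟩)
    · refine ⟨i, ?_⟩
      rw [muP_apply a hij' i, if_pos rfl, if_neg hij', abs_of_nonneg (by omega)]
      omega
    · refine ⟨j, ?_⟩
      rw [muP_apply a hij' j, if_neg (Ne.symm hij'), if_pos rfl, abs_of_nonneg (by omega)]
      omega
    · have hm : ((n : ℤ) - 1 - c).toNat < n := by omega
      refine ⟨⟨((n : ℤ) - 1 - c).toNat, hm⟩, ?_⟩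
      have hval : ((⟨((n : ℤ) - 1 - c).toNat, hm⟩ : Fin n) : ℤ) = (n : ℤ) - 1 - c := by
        simp only [Fin.val_mk]
        omega
      have hki : (⟨((n : ℤ) - 1 - c).toNat, hm⟩ : Fin n) ≠ i := by
        intro h
        rw [h] at hval; omega
      have hkj : (⟨((n : ℤ) - 1 - c).toNat, hm⟩ : Fin n) ≠ j := by
        intro h
        rw [h] at hval; omega
      rw [muP_apply a hij', if_neg hki, if_neg hkj, hval, abs_of_nonneg (by omega)]
      omega

lemma absval_muM {a : ℕ} {i j : Fin n} (hij : i < j) (hja : 2 * (n : ℤ) - a ≤ (j : ℤ) + 1)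
    (c : ℤ) :
    (∃ k, |muM n a i j k| = c) ↔
      c = (n : ℤ) - 1 - (i : ℤ) + a ∨ c = (a : ℤ) + (j : ℤ) + 1 - n ∨
        (0 ≤ c ∧ c ≤ (n : ℤ) - 1 ∧ c ≠ (n : ℤ) - 1 - (i : ℤ) ∧ c ≠ (n : ℤ) - 1 - (j : ℤ)) := by
  have hij' : i ≠ j := hij.ne
  have hi : (i : ℕ) < (j : ℕ) := hij
  have hjn := j.isLt
  have hin := i.isLt
  constructor
  · rintro ⟨k, hk⟩
    have hkn := k.isLt
    rw [muM_apply a hij' k] at hk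
    by_cases h1 : k = i
    · subst h1
      rw [if_pos rfl, if_neg hij', abs_of_nonneg (by omega)] at hk
      left; omega
    · by_cases h2 : k = j
      · subst h2
        rw [if_neg (fun h => h1 h), if_pos rfl, abs_of_nonpos (by omega)] at hk
        right; left; omega
      · rw [if_neg h1, if_neg h2, abs_of_nonneg (by omega)] at hk
        have hk1 : (k : ℕ) ≠ (i : ℕ) := fun h => h1 (Fin.ext h)
        have hk2 : (k : ℕ) ≠ (j : ℕ) := fun h => h2 (Fin.ext h)
        right; right; omega
  · rintro (rfl | rfl | ⟨hc0, hc1, hci, hcj⟩)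
    · refine ⟨i, ?_⟩
      rw [muM_apply a hij' i, if_pos rfl, if_neg hij', abs_of_nonneg (by omega)]
      omega
    · refine ⟨j, ?_⟩
      rw [muM_apply a hij' j, if_neg (Ne.symm hij'), if_pos rfl, abs_of_nonpos (by omega)]
      omega
    · have hm : ((n : ℤ) - 1 - c).toNat < n := by omega
      refine ⟨⟨((n : ℤ) - 1 - c).toNat, hm⟩, ?_⟩
      have hval : ((⟨((n : ℤ) - 1 - c).toNat, hm⟩ : Fin n) : ℤ) = (n : ℤ) - 1 - c := by
        simp only [Fin.val_mk]
        omega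
      have hki : (⟨((n : ℤ) - 1 - c).toNat, hm⟩ : Fin n) ≠ i := by
        intro h
        rw [h] at hval; omega
      have hkj : (⟨((n : ℤ) - 1 - c).toNat, hm⟩ : Fin n) ≠ j := by
        intro h
        rw [h] at hval; omega
      rw [muM_apply a hij', if_neg hki, if_neg hkj, hval, abs_of_nonneg (by omega)]
      omega

lemma muP_abs_inj {a : ℕ} {i j : Fin n} (hij : i < j) (hja : (j : ℤ) + 1 ≤ a) :
    Function.Injective fun k => |muP n a i j k| := by
  have hij' : i ≠ j := hij.ne
  have hi : (i : ℕ) < (j : ℕ) := hij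
  have hjn := j.isLt
  have hin := i.isLt
  have key : ∀ k : Fin n, |muP n a i j k| = ((n : ℤ) - 1 - (k : ℤ))
      + (if (k : ℕ) = (i : ℕ) then (a : ℤ) else 0)
      + (if (k : ℕ) = (j : ℕ) then (a : ℤ) else 0) := by
    intro k
    have hkn := k.isLt
    rw [muP_apply a hij' k]
    have e1 : (k = i) = ((k : ℕ) = (i : ℕ)) := propext ⟨congrArg Fin.val, Fin.ext⟩
    have e2 : (k = j) = ((k : ℕ) = (j : ℕ)) := propext ⟨congrArg Fin.val, Fin.ext⟩
    rw [abs_of_nonneg (by split_ifs <;> omega)]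
    simp only [e1, e2]
  intro k m h
  simp only [key] at h
  have hkn := k.isLt
  have hmn := m.isLt
  split_ifs at h <;> (apply Fin.ext; omega)

lemma prod_muP_pos {a : ℕ} {i j : Fin n} (hij : i < j) (hja : (j : ℤ) + 1 ≤ a)
    (hjl : (j : ℕ) = n - 1) : 0 < ∏ k, muP n a i j k := by
  have hij' : i ≠ j := hij.ne
  have hi : (i : ℕ) < (j : ℕ) := hij
  have hjn := j.isLt
  refine Finset.prod_pos fun k _ => ?_
  have hkn := k.isLt
  rw [muP_apply a hij' k]
  by_cases h1 : k = i
  · rw [if_pos h1, if_neg (h1 ▸ hij')]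
    have : (k : ℕ) = (i : ℕ) := congrArg Fin.val h1
    omega
  · by_cases h2 : k = j
    · rw [if_neg h1, if_pos h2]
      have : (k : ℕ) = (j : ℕ) := congrArg Fin.val h2
      omega
    · rw [if_neg h1, if_neg h2]
      have hk2 : (k : ℕ) ≠ (j : ℕ) := fun h => h2 (Fin.ext h)
      omega

lemma prod_muM_neg {a : ℕ} {i j : Fin n} (hij : i < j) (hja : 2 * (n : ℤ) - a ≤ (j : ℤ) + 1)
    (hjl : (j : ℕ) = n - 1) : ∏ k, muM n a i j k < 0 := by
  have hij' : i ≠ j := hij.ne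
  have hi : (i : ℕ) < (j : ℕ) := hij
  have hjn := j.isLt
  rw [← Finset.mul_prod_erase Finset.univ _ (Finset.mem_univ j)]
  have hneg : muM n a i j j < 0 := by
    rw [muM_apply a hij' j, if_neg (Ne.symm hij'), if_pos rfl]
    omega
  have hpos : 0 < ∏ k ∈ Finset.univ.erase j, muM n a i j k := by
    refine Finset.prod_pos fun k hk => ?_
    have hk2 : k ≠ j := (Finset.mem_erase.mp hk).1
    have hkn := k.isLt
    rw [muM_apply a hij' k, if_neg hk2]
    by_cases h1 : k = i
    · rw [if_pos h1]
      have : (k : ℕ) = (i : ℕ) := congrArg Fin.val h1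
      omega
    · rw [if_neg h1]
      have hk2' : (k : ℕ) ≠ (j : ℕ) := fun h => hk2 (Fin.ext h)
      omega
  exact mul_neg_of_neg_of_pos hneg hpos

end Char

section Sep

lemma sep1 {n a b a' b' : ℕ} {i j i' j' : Fin n}
    (h1 : i < j) (h2 : ((i : ℤ) + 1) + ((j : ℤ) + 1) - 2 * n = (a : ℤ) - (b : ℤ))
    (h3 : (j : ℤ) + 1 ≤ a)
    (h1' : i' < j') (h2' : ((i' : ℤ) + 1) + ((j' : ℤ) + 1) - 2 * n = (a' : ℤ) - (b' : ℤ))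
    (h3' : (j' : ℤ) + 1 ≤ a')
    (hg : ∃ g : WD n, WDact n g (muP n a' i' j') = muP n a i j) :
    a' = a ∧ b' = b ∧ i' = i ∧ j' = j := by
  obtain ⟨g, hg⟩ := hg
  have K : ∀ c : ℤ,
      (c = (n : ℤ) - 1 - (i : ℤ) + a ∨ c = (n : ℤ) - 1 - (j : ℤ) + a ∨
        (0 ≤ c ∧ c ≤ (n : ℤ) - 1 ∧ c ≠ (n : ℤ) - 1 - (i : ℤ) ∧ c ≠ (n : ℤ) - 1 - (j : ℤ))) ↔
      (c = (n : ℤ) - 1 - (i' : ℤ) + a' ∨ c = (n : ℤ) - 1 - (j' : ℤ) + a' ∨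
        (0 ≤ c ∧ c ≤ (n : ℤ) - 1 ∧ c ≠ (n : ℤ) - 1 - (i' : ℤ) ∧ c ≠ (n : ℤ) - 1 - (j' : ℤ))) :=
    fun c => ((absval_muP h1 h3 c).symm.trans (orbit_abs hg c)).trans (absval_muP h1' h3' c)
  have K1 := K ((n : ℤ) - 1 - (i : ℤ) + a)
  have K2 := K ((n : ℤ) - 1 - (j : ℤ) + a)
  have K3 := K ((n : ℤ) - 1 - (i' : ℤ) + a')
  have K4 := K ((n : ℤ) - 1 - (j' : ℤ) + a')
  have K5 := K ((n : ℤ) - 1 - (i : ℤ))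
  have K6 := K ((n : ℤ) - 1 - (j : ℤ))
  have K7 := K ((n : ℤ) - 1 - (i' : ℤ))
  have K8 := K ((n : ℤ) - 1 - (j' : ℤ))
  have hi : (i : ℕ) < (j : ℕ) := h1
  have hi' : (i' : ℕ) < (j' : ℕ) := h1'
  have l1 := i.isLt
  have l2 := j.isLt
  have l3 := i'.isLt
  have l4 := j'.isLt
  refine ⟨by omega, by omega, Fin.ext (by omega), Fin.ext (by omega)⟩

lemma sep2 {n a a' : ℕ} {i j i' j' : Fin n}
    (h1 : i < j) (h3 : (j : ℤ) + 1 ≤ a)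
    (h1' : i' < j') (h3' : 2 * (n : ℤ) - (a' : ℤ) ≤ (j' : ℤ) + 1)
    (hg : ∃ g : WD n, WDact n g (muM n a' i' j') = muP n a i j) : False := by
  obtain ⟨g, hg⟩ := hg
  have K : ∀ c : ℤ,
      (c = (n : ℤ) - 1 - (i : ℤ) + a ∨ c = (n : ℤ) - 1 - (j : ℤ) + a ∨
        (0 ≤ c ∧ c ≤ (n : ℤ) - 1 ∧ c ≠ (n : ℤ) - 1 - (i : ℤ) ∧ c ≠ (n : ℤ) - 1 - (j : ℤ))) ↔
      (c = (n : ℤ) - 1 - (i' : ℤ) + a' ∨ c = (a' : ℤ) + (j' : ℤ) + 1 - n ∨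
        (0 ≤ c ∧ c ≤ (n : ℤ) - 1 ∧ c ≠ (n : ℤ) - 1 - (i' : ℤ) ∧ c ≠ (n : ℤ) - 1 - (j' : ℤ))) :=
    fun c => ((absval_muP h1 h3 c).symm.trans (orbit_abs hg c)).trans (absval_muM h1' h3' c)
  have K1 := K ((n : ℤ) - 1 - (i : ℤ) + a)
  have K2 := K ((n : ℤ) - 1 - (j : ℤ) + a)
  have K3 := K ((n : ℤ) - 1 - (i' : ℤ) + a')
  have K4 := K ((a' : ℤ) + (j' : ℤ) + 1 - n)
  have K5 := K ((n : ℤ) - 1 - (i : ℤ))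
  have K6 := K ((n : ℤ) - 1 - (j : ℤ))
  have K7 := K ((n : ℤ) - 1 - (i' : ℤ))
  have K8 := K ((n : ℤ) - 1 - (j' : ℤ))
  have hi : (i : ℕ) < (j : ℕ) := h1
  have hi' : (i' : ℕ) < (j' : ℕ) := h1'
  have l1 := i.isLt
  have l2 := j.isLt
  have l3 := i'.isLt
  have l4 := j'.isLt
  have hjl : (j : ℕ) = n - 1 := by omega
  have hjl' : (j' : ℕ) = n - 1 := by omega
  have hp := orbit_prod hg
  have hpos := prod_muP_pos h1 h3 hjl
  have hneg := prod_muM_neg h1' h3' hjl'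
  rw [hp] at hpos
  exact absurd hpos (asymm hneg)

end Sep

section Main

lemma canon {n a b : ℕ} (hn : 4 ≤ n) (ha : 1 ≤ a) (hab : 2 * n < a + b)
    (hd1 : 1 ≤ (b : ℤ) - (a : ℤ)) (hd2 : (b : ℤ) - (a : ℤ) ≤ 2 * n - 3) :
    ∃ i j : Fin n, i < j ∧ ((i : ℤ) + 1) + ((j : ℤ) + 1) - 2 * n = (a : ℤ) - (b : ℤ) ∧
      (j : ℤ) + 1 ≤ a := by
  set s : ℕ := 2 * n - 2 - (b - a) with hs
  have hj : s / 2 + 1 < n := by omega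
  have hi : s - (s / 2 + 1) < n := by omega
  refine ⟨⟨s - (s / 2 + 1), hi⟩, ⟨s / 2 + 1, hj⟩, ?_, ?_, ?_⟩
  · rw [Fin.mk_lt_mk]; omega
  · simp only [Fin.val_mk]; omega
  · simp only [Fin.val_mk]; omega

lemma YD_apply_muP {n a b a' b' : ℕ} {i j : Fin n}
    (h1 : i < j) (h2 : ((i : ℤ) + 1) + ((j : ℤ) + 1) - 2 * n = (a : ℤ) - (b : ℤ))
    (h3 : (j : ℤ) + 1 ≤ a) :
    (YD n a' b').coeff (muP n a i j) = if a' = a ∧ b' = b then 1 else 0 := by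
  rw [YD, AddMonoidAlgebra.coeff_sum, Finsupp.finset_sum_apply]
  have hterm : ∀ p : Fin n × Fin n,
      ((if p.1 < p.2 ∧
          ((p.1 : ℤ) + 1) + ((p.2 : ℤ) + 1) - 2 * n = (a' : ℤ) - (b' : ℤ) ∧
          (p.2 : ℤ) + 1 ≤ (a' : ℤ) then
          AtildeD n (rhoT n + (a' : ℤ) • (Pi.single p.1 (1 : ℤ) + Pi.single p.2 (1 : ℤ)))
        else 0) +
      (if p.1 < p.2 ∧
          (p.2 : ℤ) - (p.1 : ℤ) = (b' : ℤ) - (a' : ℤ) ∧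
          2 * (n : ℤ) - (a' : ℤ) ≤ (p.2 : ℤ) + 1 then
          AtildeD n (rhoT n + (a' : ℤ) • (Pi.single p.1 (1 : ℤ) - Pi.single p.2 (1 : ℤ)))
        else 0)).coeff (muP n a i j)
      = if (a' = a ∧ b' = b) ∧ p = (i, j) then 1 else 0 := by
    intro p
    rw [AddMonoidAlgebra.coeff_add, Finsupp.add_apply]
    have hT2 : (if p.1 < p.2 ∧
          (p.2 : ℤ) - (p.1 : ℤ) = (b' : ℤ) - (a' : ℤ) ∧
          2 * (n : ℤ) - (a' : ℤ) ≤ (p.2 : ℤ) + 1 then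
          AtildeD n (rhoT n + (a' : ℤ) • (Pi.single p.1 (1 : ℤ) - Pi.single p.2 (1 : ℤ)))
        else 0).coeff (muP n a i j) = 0 := by
      split_ifs with hc
      · exact atilde_apply_eq_zero fun g hgν =>
          sep2 h1 h3 hc.1 hc.2.2 ⟨g, hgν⟩
      · rfl
    rw [hT2, add_zero]
    split_ifs with hc hδ hδ
    · obtain ⟨⟨rfl, rfl⟩, rfl⟩ := hδ
      exact atilde_self (muP_abs_inj h1 h3)
    · refine atilde_apply_eq_zero fun g hgν => hδ ?_
      obtain ⟨ha, hb, hi, hj⟩ := sep1 h1 h2 h3 hc.1 hc.2.1 hc.2.2 ⟨g, hgν⟩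
      exact ⟨⟨ha, hb⟩, Prod.ext hi hj⟩
    · exfalso
      obtain ⟨⟨rfl, rfl⟩, rfl⟩ := hδ
      exact hc ⟨h1, h2, h3⟩
    · rfl
  rw [Finset.sum_congr rfl fun p _ => hterm p]
  by_cases hδ : a' = a ∧ b' = b
  · simp only [hδ, true_and]
    rw [Finset.sum_ite_eq' Finset.univ (i, j) (fun _ => (1 : ℤ))]
    simp [hδ]
  · simp only [hδ, false_and, if_false]
    simp [hδ, Finset.sum_const_zero]

end Main

/-- Lemma 5.5 of the paper.
For `n ≥ 4` and every pair of positive integers `(a, b)` with `a + b > 2n` and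
`1 ≤ b − a ≤ 2n − 3`, the set `R_{a,b}` is nonempty and `Y_{a,b} ≠ 0`;
moreover, the family `{Y_{a,b}}` indexed by all such pairs is linearly
independent over `ℤ`. -/
theorem stmt18 (n : ℕ) (hn : 4 ≤ n) :
    (∀ a b : ℕ, 1 ≤ a → 2 * n < a + b →
      1 ≤ (b : ℤ) - (a : ℤ) → (b : ℤ) - (a : ℤ) ≤ 2 * n - 3 →
      ((∃ ij : Fin n × Fin n, ij.1 < ij.2 ∧
          ((((ij.1 : ℤ) + 1) + ((ij.2 : ℤ) + 1) - 2 * n = (a : ℤ) - (b : ℤ) ∧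
            (ij.2 : ℤ) + 1 ≤ (a : ℤ)) ∨
           ((ij.2 : ℤ) - (ij.1 : ℤ) = (b : ℤ) - (a : ℤ) ∧
            2 * (n : ℤ) - (a : ℤ) ≤ (ij.2 : ℤ) + 1))) ∧
        YD n a b ≠ 0)) ∧
    LinearIndependent ℤ
      (fun x : {ab : ℕ × ℕ // 1 ≤ ab.1 ∧ 2 * n < ab.1 + ab.2 ∧
          1 ≤ (ab.2 : ℤ) - (ab.1 : ℤ) ∧ (ab.2 : ℤ) - (ab.1 : ℤ) ≤ 2 * n - 3} =>
        YD n (x : ℕ × ℕ).1 (x : ℕ × ℕ).2) := by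
  constructor
  · intro a b ha hab hd1 hd2
    obtain ⟨i, j, h1, h2, h3⟩ := canon hn ha hab hd1 hd2
    refine ⟨⟨(i, j), h1, Or.inl ⟨h2, h3⟩⟩, ?_⟩
    intro h0
    have hval := YD_apply_muP (a' := a) (b' := b) h1 h2 h3
    rw [h0, if_pos ⟨rfl, rfl⟩] at hval
    simp at hval
  · rw [linearIndependent_iff]
    intro l hl
    ext x
    simp only [Finsupp.zero_apply]
    obtain ⟨⟨a, b⟩, ha, hab, hd1, hd2⟩ := x
    obtain ⟨i, j, h1, h2, h3⟩ := canon hn ha hab hd1 hd2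
    set x0 : {ab : ℕ × ℕ // 1 ≤ ab.1 ∧ 2 * n < ab.1 + ab.2 ∧
        1 ≤ (ab.2 : ℤ) - (ab.1 : ℤ) ∧ (ab.2 : ℤ) - (ab.1 : ℤ) ≤ 2 * n - 3} :=
      ⟨(a, b), ha, hab, hd1, hd2⟩ with hx0
    have h0 : (Finsupp.linearCombination ℤ
        (fun x : {ab : ℕ × ℕ // 1 ≤ ab.1 ∧ 2 * n < ab.1 + ab.2 ∧
          1 ≤ (ab.2 : ℤ) - (ab.1 : ℤ) ∧ (ab.2 : ℤ) - (ab.1 : ℤ) ≤ 2 * n - 3} =>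
        YD n (x : ℕ × ℕ).1 (x : ℕ × ℕ).2) l).coeff (muP n a i j) = 0 := by
      rw [hl]; rfl
    rw [Finsupp.linearCombination_apply, Finsupp.sum, AddMonoidAlgebra.coeff_sum, Finsupp.finset_sum_apply] at h0
    have hterm : ∀ y ∈ l.support,
        (l y • YD n (y : ℕ × ℕ).1 (y : ℕ × ℕ).2).coeff (muP n a i j)
          = if y = x0 then l y else 0 := by
      intro y _
      rw [AddMonoidAlgebra.coeff_smul, Finsupp.smul_apply, YD_apply_muP h1 h2 h3, smul_eq_mul]
      by_cases hy : (y : ℕ × ℕ).1 = a ∧ (y : ℕ × ℕ).2 = b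
      · rw [if_pos hy, mul_one, if_pos (Subtype.ext (Prod.ext hy.1 hy.2))]
      · rw [if_neg hy, mul_zero, if_neg]
        intro h
        subst h
        exact hy ⟨rfl, rfl⟩
    rw [Finset.sum_congr rfl hterm,
      Finset.sum_ite_eq' l.support x0 (fun y => l y)] at h0
    by_cases hx : x0 ∈ l.support
    · rwa [if_pos hx] at h0
    · exact Finsupp.notMem_support_iff.mp hx
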